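/- Let g(x) = x^{−3/2} e^{−x} for x > 0 and fix q ∈ (0, 1/2). Then sup_{u > 0} ( ∫_u^∞ x^{q−3/2} e^{−x} dx ) / ( u^q ∫_u^∞ x^{−3/2} e^{−x} dx ) < ∞. -/

import Mathlib

open MeasureTheory Set Real

private lemma integ15 (a u : ℝ) (ha : a ≤ 0) (hu : 0 < u) :
    IntegrableOn (fun x => x ^ a * Real.exp (-x)) (Ioi u) := by
  have h0 : IntegrableOn (fun x => Real.exp (-x)) (Ioi u) := by
    have := exp_neg_integrableOn_Ioi u one_pos
    simpa using this
  refine (h0.const_mul (u ^ a)).mono' ?_ ?_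
  · refine (continuousOn_of_forall_continuousAt fun x hx => ContinuousAt.mul ?_ ?_).aestronglyMeasurable
      measurableSet_Ioi
    · exact Real.continuousAt_rpow_const x a (Or.inl (ne_of_gt (hu.trans hx)))
    · exact (Real.continuous_exp.comp continuous_neg).continuousAt
  · filter_upwards [self_mem_ae_restrict measurableSet_Ioi] with x hx
    have hx0 : 0 < x := hu.trans hx
    rw [Real.norm_eq_abs, abs_of_nonneg (by positivity)]
    exact mul_le_mul_of_nonneg_right
      (Real.rpow_le_rpow_of_nonpos hu (le_of_lt hx) ha) (Real.exp_nonneg _)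

private lemma denom_lb15 {u c : ℝ} (hu : 0 < u) (huc : u < c) :
    c ^ (-(3:ℝ)/2) * Real.exp (-c) * (c - u) ≤
      ∫ x in Ioi u, x ^ (-(3:ℝ)/2) * Real.exp (-x) := by
  have hint := integ15 (-(3:ℝ)/2) u (by norm_num) hu
  have h1 : (∫ x in Ioc u c, c ^ (-(3:ℝ)/2) * Real.exp (-c)) ≤
      ∫ x in Ioc u c, x ^ (-(3:ℝ)/2) * Real.exp (-x) := by
    refine setIntegral_mono_on (integrableOn_const (by simp))
      (hint.mono_set Ioc_subset_Ioi_self) measurableSet_Ioc ?_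
    intro x hx
    have hx0 : 0 < x := hu.trans hx.1
    exact mul_le_mul (Real.rpow_le_rpow_of_nonpos hx0 hx.2 (by norm_num))
      (Real.exp_le_exp.2 (by linarith [hx.2])) (Real.exp_nonneg _)
      (Real.rpow_nonneg hx0.le _)
  have h2 : (∫ x in Ioc u c, x ^ (-(3:ℝ)/2) * Real.exp (-x)) ≤
      ∫ x in Ioi u, x ^ (-(3:ℝ)/2) * Real.exp (-x) := by
    refine setIntegral_mono_set hint ?_ (Ioc_subset_Ioi_self.eventuallyLE)
    filter_upwards [self_mem_ae_restrict measurableSet_Ioi] with x hx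
    have hx0 : 0 < x := hu.trans hx
    positivity
  calc c ^ (-(3:ℝ)/2) * Real.exp (-c) * (c - u)
      = ∫ _ in Ioc u c, c ^ (-(3:ℝ)/2) * Real.exp (-c) := by
        rw [setIntegral_const, measureReal_def, Real.volume_Ioc, smul_eq_mul,
          ENNReal.toReal_ofReal (by linarith)]
        ring
    _ ≤ _ := h1.trans h2

/-- for `0 < q < 1/2`,
`sup_{u>0} (∫_u^∞ x^{q-3/2} e^{-x} dx) / (u^q ∫_u^∞ x^{-3/2} e^{-x} dx) < ∞`. -/
theorem stmt15 (q : ℝ) (hq : 0 < q) (hq' : q < 1 / 2) :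
    ∃ M : ℝ, ∀ u : ℝ, 0 < u →
      (∫ x in Set.Ioi u, x ^ (q - 3/2) * Real.exp (-x)) /
        (u ^ q * ∫ x in Set.Ioi u, x ^ (-(3:ℝ)/2) * Real.exp (-x)) ≤ M := by
  have hs : (0:ℝ) < 1/2 - q := by linarith
  have hc2 : (0:ℝ) < (2:ℝ) ^ (-(3:ℝ)/2) := Real.rpow_pos_of_pos two_pos _
  set M₁ : ℝ := Real.exp 2 / ((1/2 - q) * (2:ℝ) ^ (-(3:ℝ)/2)) with hM₁
  set M₂ : ℝ := Real.exp 1 / (2:ℝ) ^ (-(3:ℝ)/2) with hM₂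
  have hM₁pos : 0 < M₁ := by positivity
  have hM₂pos : 0 < M₂ := by positivity
  refine ⟨max M₁ M₂, fun u hu => ?_⟩
  set I := ∫ x in Ioi u, x ^ (-(3:ℝ)/2) * Real.exp (-x) with hI
  set Nu := ∫ x in Ioi u, x ^ (q - 3/2) * Real.exp (-x) with hNu
  have huq : (0:ℝ) < u ^ q := Real.rpow_pos_of_pos hu _
  -- denominator positivity via lower bound at c = u + 1
  have hden0 : (u+1) ^ (-(3:ℝ)/2) * Real.exp (-(u+1)) * ((u+1) - u) ≤ I :=
    denom_lb15 hu (by linarith)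
  have hIpos : 0 < I := lt_of_lt_of_le
    (mul_pos (mul_pos (Real.rpow_pos_of_pos (by linarith) _) (Real.exp_pos _)) (by linarith)) hden0
  have hdenpos : 0 < u ^ q * I := mul_pos huq hIpos
  rw [div_le_iff₀ hdenpos]
  rcases le_or_gt u 1 with hu1 | hu1
  · -- small u : use c = 2u and numerator bound ∫ x^{q-3/2}
    have hnum : Nu ≤ u ^ (q - 1/2) / (1/2 - q) := by
      have h1 : Nu ≤ ∫ x in Ioi u, x ^ (q - 3/2) := by
        refine setIntegral_mono_on (integ15 (q - 3/2) u (by linarith) hu)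
          (integrableOn_Ioi_rpow_of_lt (by linarith) hu) measurableSet_Ioi ?_
        intro x hx
        have hx0 : 0 < x := hu.trans hx
        nth_rewrite 2 [show x ^ (q - 3/2) = x ^ (q - 3/2) * 1 by ring]
        exact mul_le_mul_of_nonneg_left (Real.exp_le_one_iff.2 (by linarith))
          (Real.rpow_nonneg hx0.le _)
      rw [integral_Ioi_rpow_of_lt (by linarith) hu,
        show q - 3/2 + 1 = q - 1/2 by ring, neg_div, ← div_neg,
        show -(q - 1/2) = 1/2 - q from by ring] at h1
      exact h1
    have hden : (2*u) ^ (-(3:ℝ)/2) * Real.exp (-(2*u)) * (2*u - u) ≤ I :=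
      denom_lb15 hu (by linarith)
    have hsplit : (2*u) ^ (-(3:ℝ)/2) = 2 ^ (-(3:ℝ)/2) * u ^ (-(3:ℝ)/2) :=
      Real.mul_rpow (by norm_num) hu.le
    have hkey : u ^ (q - 1/2) / (1/2 - q) ≤
        M₁ * (u ^ q * ((2*u) ^ (-(3:ℝ)/2) * Real.exp (-(2*u)) * (2*u - u))) := by
      rw [hsplit]
      have hupow : u ^ q * (2 ^ (-(3:ℝ)/2) * u ^ (-(3:ℝ)/2) * Real.exp (-(2*u)) * (2*u - u))
          = 2 ^ (-(3:ℝ)/2) * Real.exp (-(2*u)) * u ^ (q - 1/2) := by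
        have : u ^ q * u ^ (-(3:ℝ)/2) * u = u ^ (q - 1/2) := by
          rw [← Real.rpow_add hu, show q + -(3:ℝ)/2 = q - 3/2 by ring]
          nth_rewrite 2 [← Real.rpow_one u]
          rw [← Real.rpow_add hu]; ring_nf
        calc u ^ q * (2 ^ (-(3:ℝ)/2) * u ^ (-(3:ℝ)/2) * Real.exp (-(2*u)) * (2*u - u))
            = 2 ^ (-(3:ℝ)/2) * Real.exp (-(2*u)) * (u ^ q * u ^ (-(3:ℝ)/2) * u) := by ring
          _ = _ := by rw [this]
      rw [hupow, hM₁]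
      have heq : Real.exp 2 / ((1/2 - q) * (2:ℝ) ^ (-(3:ℝ)/2)) *
          (2 ^ (-(3:ℝ)/2) * Real.exp (-(2*u)) * u ^ (q - 1/2))
          = (Real.exp 2 * Real.exp (-(2*u))) * u ^ (q - 1/2) / (1/2 - q) := by
        rw [div_mul_eq_mul_div, div_eq_div_iff (mul_ne_zero hs.ne' hc2.ne') hs.ne']
        ring
      rw [heq, ← Real.exp_add]
      have h1 : (1:ℝ) ≤ Real.exp (2 + -(2*u)) := by
        rw [show (1:ℝ) = Real.exp 0 by simp]
        exact Real.exp_le_exp.2 (by linarith)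
      have hA : (0:ℝ) ≤ u ^ (q - 1/2) := Real.rpow_nonneg hu.le _
      rw [div_le_div_iff_of_pos_right hs]
      nlinarith
    calc Nu ≤ u ^ (q - 1/2) / (1/2 - q) := hnum
      _ ≤ M₁ * (u ^ q * ((2*u) ^ (-(3:ℝ)/2) * Real.exp (-(2*u)) * (2*u - u))) := hkey
      _ ≤ M₁ * (u ^ q * I) := by
          refine mul_le_mul_of_nonneg_left (mul_le_mul_of_nonneg_left hden huq.le) hM₁pos.le
      _ ≤ max M₁ M₂ * (u ^ q * I) :=
          mul_le_mul_of_nonneg_right (le_max_left _ _) hdenpos.le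
  · -- large u : numerator ≤ u^{q-3/2} e^{-u}, c = u+1
    have hnum : Nu ≤ u ^ (q - 3/2) * Real.exp (-u) := by
      have h1 : Nu ≤ ∫ x in Ioi u, u ^ (q - 3/2) * Real.exp (-x) := by
        refine setIntegral_mono_on (integ15 (q - 3/2) u (by linarith) hu)
          (((exp_neg_integrableOn_Ioi u one_pos).congr_fun
            (fun x _ => by simp) measurableSet_Ioi).const_mul _) measurableSet_Ioi ?_
        intro x hx
        exact mul_le_mul_of_nonneg_right
          (Real.rpow_le_rpow_of_nonpos hu (le_of_lt hx) (by linarith)) (Real.exp_nonneg _)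
      rwa [MeasureTheory.integral_const_mul, integral_exp_neg_Ioi] at h1
    have hkey : u ^ (q - 3/2) * Real.exp (-u) ≤
        M₂ * (u ^ q * ((u+1) ^ (-(3:ℝ)/2) * Real.exp (-(u+1)) * ((u+1) - u))) := by
      have h2u : (u+1) ^ (-(3:ℝ)/2) ≥ (2*u) ^ (-(3:ℝ)/2) :=
        Real.rpow_le_rpow_of_nonpos (by linarith) (by linarith) (by norm_num)
      have hstep : M₂ * (u ^ q * ((2*u) ^ (-(3:ℝ)/2) * Real.exp (-(u+1)) * ((u+1) - u)))
          = u ^ (q - 3/2) * Real.exp (-u) := by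
        rw [Real.mul_rpow (by norm_num : (0:ℝ) ≤ 2) hu.le, hM₂,
          show -(u+1) = -u + -1 by ring, Real.exp_add,
          show u ^ q * (2 ^ (-(3:ℝ)/2) * u ^ (-(3:ℝ)/2) * (Real.exp (-u) * Real.exp (-1)) * ((u+1) - u))
            = (u ^ q * u ^ (-(3:ℝ)/2)) * (2 ^ (-(3:ℝ)/2) * Real.exp (-1)) * Real.exp (-u) by ring,
          ← Real.rpow_add hu, show q + -(3:ℝ)/2 = q - 3/2 by ring]
        rw [Real.exp_neg 1]
        field_simp
      rw [← hstep]
      refine mul_le_mul_of_nonneg_left (mul_le_mul_of_nonneg_left ?_ huq.le) hM₂pos.le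
      refine mul_le_mul_of_nonneg_right (mul_le_mul_of_nonneg_right h2u (Real.exp_nonneg _)) (by linarith)
    calc Nu ≤ u ^ (q - 3/2) * Real.exp (-u) := hnum
      _ ≤ M₂ * (u ^ q * ((u+1) ^ (-(3:ℝ)/2) * Real.exp (-(u+1)) * ((u+1) - u))) := hkey
      _ ≤ M₂ * (u ^ q * I) :=
          mul_le_mul_of_nonneg_left (mul_le_mul_of_nonneg_left hden0 huq.le) hM₂pos.le
      _ ≤ max M₁ M₂ * (u ^ q * I) :=
          mul_le_mul_of_nonneg_right (le_max_right _ _) hdenpos.le
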